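/- For fixed real t and m > 0, the function τ ↦ F_{m,τ}(t), where F_{m,τ} is the cumulative distribution function of the non-central t distribution with m degrees of freedom and non-centrality parameter τ, is continuous and strictly decreasing in τ, with limits 1 as τ → -∞ and 0 as τ → +∞. -/

import Mathlib

open MeasureTheory ProbabilityTheory Filter

noncomputable def Phi (x : ℝ) : ℝ := ∫ u in Set.Iic x, gaussianPDFReal 0 1 u

lemma phi_integrable : Integrable (gaussianPDFReal 0 1) := integrable_gaussianPDFReal 0 1

lemma phi_pos_pdf (x : ℝ) : 0 < gaussianPDFReal 0 1 x := gaussianPDFReal_pos 0 1 x one_ne_zero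

lemma Phi_eq_cdf (x : ℝ) : Phi x = cdf (gaussianReal 0 1) x := by
  rw [cdf_eq_real, measureReal_def, gaussianReal_apply_eq_integral 0 one_ne_zero,
    ENNReal.toReal_ofReal]
  · rfl
  · exact setIntegral_nonneg measurableSet_Iic fun u _ => (phi_pos_pdf u).le

lemma ofReal_Phi (x : ℝ) : ENNReal.ofReal (Phi x) = gaussianReal 0 1 (Set.Iic x) := by
  rw [Phi_eq_cdf]; exact ofReal_cdf _ x

lemma Phi_sub (a b : ℝ) : Phi b - Phi a = ∫ x in a..b, gaussianPDFReal 0 1 x :=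
  intervalIntegral.integral_Iic_sub_Iic phi_integrable.integrableOn phi_integrable.integrableOn

lemma Phi_strictMono : StrictMono Phi := by
  intro a b hab
  have := intervalIntegral.intervalIntegral_pos_of_pos (f := gaussianPDFReal 0 1)
    phi_integrable.intervalIntegrable phi_pos_pdf hab
  rw [← Phi_sub] at this; linarith

lemma Phi_continuous : Continuous Phi := by
  have : Phi = fun x => Phi 0 + ∫ u in (0:ℝ)..x, gaussianPDFReal 0 1 u := by
    funext x; rw [← Phi_sub]; ring
  rw [this]
  exact continuous_const.add (phi_integrable.continuous_primitive 0)

lemma Phi_tendsto_atTop : Tendsto Phi atTop (nhds 1) := by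
  simp only [funext Phi_eq_cdf]; exact tendsto_cdf_atTop _

lemma Phi_tendsto_atBot : Tendsto Phi atBot (nhds 0) := by
  simp only [funext Phi_eq_cdf]; exact tendsto_cdf_atBot _

lemma Phi_nonneg (x : ℝ) : 0 ≤ Phi x :=
  setIntegral_nonneg measurableSet_Iic fun u _ => (phi_pos_pdf u).le

lemma Phi_le_one (x : ℝ) : Phi x ≤ 1 := by rw [Phi_eq_cdf]; exact cdf_le_one _ x

lemma Phi_measurable : Measurable Phi := Phi_continuous.measurable

/-- The non-central t distribution with `m` degrees of freedom and non-centrality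
parameter `τ`: the law of `X / √(Y/m)` with `X ~ N(τ,1)` and `Y ~ χ²(m)` independent. -/
noncomputable def noncentralT (m τ : ℝ) : Measure ℝ :=
  ((gaussianReal τ 1).prod (gammaMeasure (m / 2) (1 / 2))).map
    fun p => p.1 / Real.sqrt (p.2 / m)

/-- The CDF of the non-central t distribution at `t`. -/
noncomputable def noncentralTCdf (m τ t : ℝ) : ℝ :=
  (noncentralT m τ (Set.Iic t)).toReal

lemma gamma_ae_pos (m : ℝ) : ∀ᵐ y ∂(gammaMeasure (m / 2) (1 / 2)), 0 < y := by
  rw [ae_iff]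
  have h : {y : ℝ | ¬ 0 < y} = Set.Iic 0 := by ext y; simp
  rw [h, gammaMeasure, withDensity_apply _ measurableSet_Iic,
    setLIntegral_congr (Iio_ae_eq_Iic (a := (0:ℝ)) (μ := volume)).symm]
  exact lintegral_gammaPDF_of_nonpos le_rfl

lemma meas_inner (m t τ : ℝ) : Measurable fun y : ℝ => t * Real.sqrt (y / m) - τ :=
  ((Real.continuous_sqrt.measurable.comp (measurable_id.div_const m)).const_mul t).sub_const τ

lemma gammaProb (m : ℝ) (hm : 0 < m) :
    IsProbabilityMeasure (gammaMeasure (m / 2) (1 / 2)) :=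
  isProbabilityMeasure_gammaMeasure (by positivity) (by norm_num)

lemma int_F (m t τ : ℝ) (hm : 0 < m) :
    Integrable (fun y => Phi (t * Real.sqrt (y / m) - τ)) (gammaMeasure (m / 2) (1 / 2)) := by
  have := gammaProb m hm
  refine (integrable_const (1:ℝ)).mono'
    ((Phi_measurable.comp (meas_inner m t τ)).aestronglyMeasurable) (ae_of_all _ fun y => ?_)
  rw [Real.norm_eq_abs, abs_of_nonneg (Phi_nonneg _)]
  exact Phi_le_one _

lemma noncentralTCdf_eq (m t : ℝ) (hm : 0 < m) (τ : ℝ) :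
    noncentralTCdf m τ t
      = ∫ y, Phi (t * Real.sqrt (y / m) - τ) ∂(gammaMeasure (m / 2) (1 / 2)) := by
  have := gammaProb m hm
  set Γ := gammaMeasure (m / 2) (1 / 2)
  have hf : Measurable fun p : ℝ × ℝ => p.1 / Real.sqrt (p.2 / m) :=
    measurable_fst.div (Real.continuous_sqrt.measurable.comp (measurable_snd.div_const m))
  have hS : MeasurableSet ((fun p : ℝ × ℝ => p.1 / Real.sqrt (p.2 / m)) ⁻¹' Set.Iic t) :=
    hf measurableSet_Iic
  rw [noncentralTCdf, noncentralT, Measure.map_apply hf measurableSet_Iic,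
    ← Measure.prod_swap, Measure.map_apply measurable_swap hS,
    Measure.prod_apply (measurable_swap hS)]
  have key : ∀ᵐ y ∂Γ,
      gaussianReal τ 1 (Prod.mk y ⁻¹' (Prod.swap ⁻¹'
        ((fun p : ℝ × ℝ => p.1 / Real.sqrt (p.2 / m)) ⁻¹' Set.Iic t)))
        = ENNReal.ofReal (Phi (t * Real.sqrt (y / m) - τ)) := by
    filter_upwards [gamma_ae_pos m] with y hy
    have hs : 0 < Real.sqrt (y / m) := Real.sqrt_pos.2 (div_pos hy hm)
    have hset : (Prod.mk y ⁻¹' (Prod.swap ⁻¹'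
        ((fun p : ℝ × ℝ => p.1 / Real.sqrt (p.2 / m)) ⁻¹' Set.Iic t)))
        = Set.Iic (t * Real.sqrt (y / m)) := by
      ext x
      simp only [Set.mem_preimage, Prod.swap_prod_mk, Set.mem_Iic]
      rw [div_le_iff₀ hs, mul_comm]
    rw [hset]
    have hmap := gaussianReal_map_add_const (μ := 0) (v := 1) τ
    rw [zero_add] at hmap
    rw [← hmap, Measure.map_apply (measurable_add_const τ) measurableSet_Iic]
    have hpre : (· + τ) ⁻¹' Set.Iic (t * Real.sqrt (y / m))
        = Set.Iic (t * Real.sqrt (y / m) - τ) := by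
      ext x; simp [le_sub_iff_add_le]
    rw [hpre, ofReal_Phi]
  rw [lintegral_congr_ae key,
    ← ofReal_integral_eq_lintegral_ofReal (int_F m t τ hm)
      (ae_of_all _ fun y => Phi_nonneg _),
    ENNReal.toReal_ofReal]
  exact integral_nonneg fun y => Phi_nonneg _

lemma norm_Phi_le (x : ℝ) : ‖Phi x‖ ≤ 1 := by
  rw [Real.norm_eq_abs, abs_of_nonneg (Phi_nonneg _)]; exact Phi_le_one _

theorem noncentralT_cdf_strictAnti (m t : ℝ) (hm : 0 < m) :
    Continuous (fun τ => noncentralTCdf m τ t) ∧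
      StrictAnti (fun τ => noncentralTCdf m τ t) ∧
      Tendsto (fun τ => noncentralTCdf m τ t) atBot (nhds 1) ∧
      Tendsto (fun τ => noncentralTCdf m τ t) atTop (nhds 0) := by
  have hprob := gammaProb m hm
  set Γ := gammaMeasure (m / 2) (1 / 2) with hΓ
  have heq : (fun τ => noncentralTCdf m τ t)
      = fun τ => ∫ y, Phi (t * Real.sqrt (y / m) - τ) ∂Γ :=
    funext (noncentralTCdf_eq m t hm)
  rw [heq]
  refine ⟨?_, ?_, ?_, ?_⟩
  · exact continuous_of_dominated
      (fun τ => (Phi_measurable.comp (meas_inner m t τ)).aestronglyMeasurable)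
      (fun τ => ae_of_all _ fun y => norm_Phi_le _)
      (integrable_const 1)
      (ae_of_all _ fun y => Phi_continuous.comp (continuous_const.sub continuous_id))
  · intro a b hab
    have hia := int_F m t a hm
    have hib := int_F m t b hm
    have hpos : 0 < ∫ y, (Phi (t * Real.sqrt (y / m) - a)
        - Phi (t * Real.sqrt (y / m) - b)) ∂Γ := by
      rw [integral_pos_iff_support_of_nonneg
        (fun y => sub_nonneg.2 (Phi_strictMono.monotone (by linarith)))
        (hia.sub hib)]
      have hsupp : (Function.support fun y => Phi (t * Real.sqrt (y / m) - a)
          - Phi (t * Real.sqrt (y / m) - b)) = Set.univ := by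
        ext y
        simp only [Function.mem_support, Set.mem_univ, iff_true]
        exact ne_of_gt (sub_pos.2 (Phi_strictMono (by linarith)))
      rw [hsupp, measure_univ]
      exact one_pos
    rw [integral_sub hia hib] at hpos
    dsimp only
    linarith
  · have h := tendsto_integral_filter_of_dominated_convergence (μ := Γ)
      (F := fun τ y => Phi (t * Real.sqrt (y / m) - τ)) (f := fun _ => (1:ℝ))
      (l := atBot) (fun _ => (1:ℝ))
      (Eventually.of_forall fun τ =>
        (Phi_measurable.comp (meas_inner m t τ)).aestronglyMeasurable)
      (Eventually.of_forall fun τ => ae_of_all _ fun y => norm_Phi_le _)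
      (integrable_const 1)
      (ae_of_all _ fun y => ?_)
    · simpa using h
    · have harg : Tendsto (fun τ => t * Real.sqrt (y / m) - τ) atBot atTop := by
        simp only [sub_eq_add_neg]
        exact tendsto_atTop_add_const_left atBot _ tendsto_neg_atBot_atTop
      exact Phi_tendsto_atTop.comp harg
  · have h := tendsto_integral_filter_of_dominated_convergence (μ := Γ)
      (F := fun τ y => Phi (t * Real.sqrt (y / m) - τ)) (f := fun _ => (0:ℝ))
      (l := atTop) (fun _ => (1:ℝ))
      (Eventually.of_forall fun τ =>
        (Phi_measurable.comp (meas_inner m t τ)).aestronglyMeasurable)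
      (Eventually.of_forall fun τ => ae_of_all _ fun y => norm_Phi_le _)
      (integrable_const 1)
      (ae_of_all _ fun y => ?_)
    · simpa using h
    · have harg : Tendsto (fun τ => t * Real.sqrt (y / m) - τ) atTop atBot := by
        simp only [sub_eq_add_neg]
        exact tendsto_atBot_add_const_left atTop _ tendsto_neg_atTop_atBot
      exact Phi_tendsto_atBot.comp harg
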